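/- Let k ≥ 2, z ∈ ℂ, and define the spherical function φ_z : F_k → ℂ by φ_z(x) = p_{|x|}(z)/e_{|x|}. Then φ_z ∗ (χ_1/(2k)) = (z/(2k))·φ_z; equivalently, ∑_{y ∈ E_1} φ_z(xy) = z·φ_z(x) for all x ∈ F_k. -/

import Mathlib

/-- The sphere of radius `n` about the identity in the free group `F_k`:
the finite set of elements of reduced word length `n`. -/
noncomputable def sphere (k n : ℕ) : Finset (FreeGroup (Fin k)) :=
  (Set.Finite.preimage (Function.Injective.injOn FreeGroup.toWord_injective)
    (List.finite_length_eq ((Fin k) × Bool) n)).toFinset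

/-- `χ_n = ∑_{|x| = n} x`, the sum of the sphere of radius `n` in `ℂ[F_k]`. -/
noncomputable def chi (k n : ℕ) : MonoidAlgebra ℂ (FreeGroup (Fin k)) :=
  ∑ x ∈ sphere k n, MonoidAlgebra.of ℂ (FreeGroup (Fin k)) x

/-- The polynomials `p_0 = 1`, `p_1 = z`, `p_2 = z² - 2k`,
`p_{n+1} = z p_n - (2k-1) p_{n-1}` for `n ≥ 2`. -/
noncomputable def p (k : ℕ) : ℕ → Polynomial ℂ
  | 0 => 1
  | 1 => Polynomial.X
  | 2 => Polynomial.X ^ 2 - Polynomial.C ((2 * k : ℕ) : ℂ)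
  | (n + 3) => Polynomial.X * p k (n + 2) - Polynomial.C ((2 * k - 1 : ℕ) : ℂ) * p k (n + 1)

/-- `e_0 = 1` and `e_n = 2k(2k-1)^{n-1}` for `n ≥ 1`, the cardinality of the sphere. -/
def eN (k n : ℕ) : ℕ := if n = 0 then 1 else 2 * k * (2 * k - 1) ^ (n - 1)

/-- The spherical function `φ_z(x) = p_{|x|}(z)/e_{|x|}`. -/
noncomputable def phiz (k : ℕ) (z : ℂ) : FreeGroup (Fin k) → ℂ :=
  fun x => (p k x.toWord.length).eval z / (eN k x.toWord.length : ℂ)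

-- f n := p_n(z)/e_n
noncomputable def fl (k : ℕ) (z : ℂ) (n : ℕ) : ℂ := (p k n).eval z / (eN k n : ℂ)

lemma mem_sphere_iff {k n : ℕ} {x : FreeGroup (Fin k)} :
    x ∈ sphere k n ↔ x.toWord.length = n := by
  simp [sphere, Set.Finite.mem_toFinset]

lemma toWord_single {k : ℕ} (ab : Fin k × Bool) :
    (FreeGroup.mk [ab]).toWord = [ab] := by
  rw [FreeGroup.toWord_mk, FreeGroup.reduce_singleton]

lemma sphere_one_eq (k : ℕ) :
    sphere k 1 = Finset.univ.image (fun ab : Fin k × Bool => FreeGroup.mk [ab]) := by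
  ext x
  simp only [mem_sphere_iff, Finset.mem_image, Finset.mem_univ, true_and]
  constructor
  · intro h
    match hw : x.toWord, h with
    | [ab], _ => exact ⟨ab, by rw [← hw, FreeGroup.mk_toWord]⟩
  · rintro ⟨ab, rfl⟩
    rw [toWord_single]; rfl

lemma single_inj {k : ℕ} : Function.Injective (fun ab : Fin k × Bool => FreeGroup.mk [ab]) := by
  intro a b h
  have := congrArg FreeGroup.toWord h
  simpa [toWord_single] using this

lemma toWord_single_mul {k : ℕ} (ab : Fin k × Bool) (x : FreeGroup (Fin k)) :
    (FreeGroup.mk [ab] * x).toWord =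
      List.casesOn x.toWord [ab] fun hd tl =>
        if ab.1 = hd.1 ∧ ab.2 = !hd.2 then tl else ab :: hd :: tl := by
  conv_lhs => rw [← FreeGroup.mk_toWord (x := x), FreeGroup.mul_mk]
  rw [FreeGroup.toWord_mk, List.singleton_append, FreeGroup.reduce.cons, FreeGroup.reduce_toWord]

lemma hcast {k : ℕ} (hk : 2 ≤ k) : ((2 * k - 1 : ℕ) : ℂ) = 2 * (k : ℂ) - 1 := by
  have : (1:ℕ) ≤ 2 * k := by omega
  push_cast [Nat.cast_sub this]
  ring

lemma alg0 {k : ℕ} (hk : 2 ≤ k) (z : ℂ) : (2 * (k:ℂ)) * fl k z 1 = z := by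
  have hk0 : (k : ℂ) ≠ 0 := Nat.cast_ne_zero.2 (by omega)
  simp only [fl, p, eN]
  norm_num
  field_simp

lemma alg {k : ℕ} (hk : 2 ≤ k) (z : ℂ) (n : ℕ) :
    fl k z n + (2 * (k:ℂ) - 1) * fl k z (n + 2) = z * fl k z (n + 1) := by
  have hk0 : (2 * (k : ℂ)) ≠ 0 := by
    have : (k : ℂ) ≠ 0 := Nat.cast_ne_zero.2 (by omega)
    simpa using this
  have hc : (2 * (k:ℂ) - 1) ≠ 0 := by
    rw [← hcast hk]
    exact Nat.cast_ne_zero.2 (by omega)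
  match n with
  | 0 =>
    have hc' : ((k * 2 - 1 : ℕ) : ℂ) = 2 * (k:ℂ) - 1 := by rw [mul_comm]; exact hcast hk
    have hk1 : (k : ℂ) ≠ 0 := Nat.cast_ne_zero.2 (by omega)
    simp only [fl, p, eN]
    norm_num [hcast hk, hc']
    field_simp
    ring
  | (m + 1) =>
    have hp3 : p k (m + 3) = Polynomial.X * p k (m + 2)
        - Polynomial.C ((2 * k - 1 : ℕ) : ℂ) * p k (m + 1) := rfl
    simp only [fl, hp3, eN, Polynomial.eval_mul, Polynomial.eval_sub, Polynomial.eval_X,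
      Polynomial.eval_C]
    norm_num [hcast hk]
    rw [show m + 1 + 1 = m + 2 from rfl]
    have hpow : (2 * (k:ℂ) - 1) ^ m ≠ 0 := pow_ne_zero _ hc
    field_simp
    ring

lemma leftSum {k : ℕ} (hk : 2 ≤ k) (z : ℂ) (w : FreeGroup (Fin k)) :
    ∑ y ∈ sphere k 1, fl k z ((y * w).toWord.length) = z * fl k z w.toWord.length := by
  rw [sphere_one_eq, Finset.sum_image (fun a _ b _ h => single_inj h)]
  rcases h : w.toWord with _ | ⟨hd, tl⟩
  · have : ∀ ab : Fin k × Bool, (FreeGroup.mk [ab] * w).toWord.length = 1 := by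
      intro ab; rw [toWord_single_mul, h]; rfl
    simp only [this]
    rw [Finset.sum_const, Finset.card_univ]
    have hcard : Fintype.card (Fin k × Bool) = 2 * k := by simp [mul_comm]
    rw [hcard, nsmul_eq_mul]
    simp only [List.length_nil]
    have h0 : fl k z 0 = 1 := by simp [fl, p, eN]
    rw [h0, mul_one]
    push_cast
    exact alg0 hk z
  · set c0 : Fin k × Bool := (hd.1, !hd.2) with hc0
    have hterm : ∀ ab : Fin k × Bool, fl k z ((FreeGroup.mk [ab] * w).toWord.length)
        = if ab = c0 then fl k z tl.length else fl k z (tl.length + 2) := by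
      intro ab
      rw [toWord_single_mul, h]
      by_cases hab : ab = c0
      · have : ab.1 = hd.1 ∧ ab.2 = !hd.2 := by rw [hab]; exact ⟨rfl, rfl⟩
        show fl k z (if ab.1 = hd.1 ∧ ab.2 = !hd.2 then tl else ab :: hd :: tl).length = _
        rw [if_pos this, if_pos hab]
      · have : ¬(ab.1 = hd.1 ∧ ab.2 = !hd.2) := by
          intro ⟨h1, h2⟩; exact hab (Prod.ext h1 h2)
        simp [hab, this]
    simp only [hterm]
    have hsplit : ∀ ab : Fin k × Bool,
        (if ab = c0 then fl k z tl.length else fl k z (tl.length + 2)) =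
        fl k z (tl.length + 2) +
          (if ab = c0 then fl k z tl.length - fl k z (tl.length + 2) else 0) := by
      intro ab; by_cases hab : ab = c0 <;> simp [hab]
    simp only [hsplit]
    rw [Finset.sum_add_distrib, Finset.sum_ite_eq' Finset.univ c0, if_pos (Finset.mem_univ _),
      Finset.sum_const, Finset.card_univ, nsmul_eq_mul]
    have hcard : Fintype.card (Fin k × Bool) = 2 * k := by simp [mul_comm]
    rw [hcard]
    have := alg hk z tl.length
    simp only [List.length_cons]
    push_cast
    linear_combination this


/-- `∑_{y ∈ E_1} φ_z(xy) = z·φ_z(x)` for all `x ∈ F_k`,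
i.e. `φ_z ∗ (χ_1/(2k)) = (z/(2k))·φ_z`. -/
theorem stmt13 (k : ℕ) (hk : 2 ≤ k) (z : ℂ) :
    ∀ x : FreeGroup (Fin k), ∑ y ∈ sphere k 1, phiz k z (x * y) = z * phiz k z x := by
  intro x
  have hphi : ∀ w : FreeGroup (Fin k), phiz k z w = fl k z w.toWord.length := fun _ => rfl
  have hlen_inv : ∀ w : FreeGroup (Fin k), w⁻¹.toWord.length = w.toWord.length := by
    intro w; rw [FreeGroup.toWord_inv, FreeGroup.invRev_length]
  calc ∑ y ∈ sphere k 1, phiz k z (x * y)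
      = ∑ y ∈ sphere k 1, fl k z ((y * x⁻¹).toWord.length) := by
        refine Finset.sum_nbij' (fun y => y⁻¹) (fun y => y⁻¹) ?_ ?_ ?_ ?_ ?_
        · intro y hy; rw [mem_sphere_iff] at hy ⊢; rw [hlen_inv]; exact hy
        · intro y hy; rw [mem_sphere_iff] at hy ⊢; rw [hlen_inv]; exact hy
        · intro y _; simp
        · intro y _; simp
        · intro y _
          rw [hphi]
          congr 1
          rw [← hlen_inv (x * y), mul_inv_rev]
    _ = z * fl k z (x⁻¹.toWord.length) := leftSum hk z x⁻¹
    _ = z * phiz k z x := by rw [hlen_inv, hphi]
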